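/- In the setting of the previous statement (convergence group G on M, quasimetric ρ on the space of distinct triples T, and sets D_M(x,R) of boundary points reachable by sequences staying within ρ-distance R of x): if x, y ∈ T satisfy ρ(x,y) ≥ 2R + 2, then D_M(x,R) ∩ D_M(y,R) = ∅. -/
import Mathlib


open Set Pointwise

section AnnulusSystem

variable {M : Type*} [TopologicalSpace M]

/-- An annulus on `M`: an ordered pair of disjoint closed sets whose union does not cover `M`. -/
def IsAnnulus (A : Set M × Set M) : Prop :=
  IsClosed A.1 ∧ IsClosed A.2 ∧ Disjoint A.1 A.2 ∧ (A.1 ∪ A.2)ᶜ.Nonempty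

/-- The relation `A < B` between annuli: `int A⁺ ∪ int B⁻ = M`. -/
def AnnLt (A B : Set M × Set M) : Prop := interior A.2 ∪ interior B.1 = Set.univ

/-- There is a chain `K < A₁ < ⋯ < Aₙ < L` of annuli of `𝒜`. -/
def HasChain (𝒜 : Set (Set M × Set M)) (K L : Set M) (n : ℕ) : Prop :=
  ∃ c : Fin n → Set M × Set M, (∀ i, c i ∈ 𝒜) ∧
    (∀ i : Fin n, (i : ℕ) = 0 → K ⊆ interior (c i).1) ∧
    (∀ i j : Fin n, (i : ℕ) + 1 = (j : ℕ) → AnnLt (c i) (c j)) ∧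
    (∀ i : Fin n, (i : ℕ) + 1 = n → L ⊆ interior (c i).2)

/-- The chain length `(K|L) ∈ ℕ ∪ {∞}`. -/
noncomputable def chainLen (𝒜 : Set (Set M × Set M)) (K L : Set M) : ℕ∞ :=
  ⨆ (n : ℕ) (_ : HasChain 𝒜 K L n), (n : ℕ∞)

/-- The crossratio `(x,y|z,t) := ({x,y}|{z,t})`. -/
noncomputable def crossratio (𝒜 : Set (Set M × Set M)) (x y z t : M) : ℕ∞ :=
  chainLen 𝒜 {x, y} {z, t}

/-- The symmetric `G`-invariant annulus system generated by a single annulus `A`. -/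
def annSys (G : Type*) [Group G] [MulAction G M] (A : Set M × Set M) :
    Set (Set M × Set M) :=
  {B | ∃ g : G, B = (g • A.1, g • A.2) ∨ B = (g • A.2, g • A.1)}

end AnnulusSystem

open Filter in
/-- A group action on a topological space has the convergence property if every sequence of
distinct elements has a subsequence converging locally uniformly on the complement of a
(repelling) point `a` to a constant (attracting) point `b`. -/
def ConvergenceAction (G M : Type*) [Group G] [TopologicalSpace M] [MulAction G M] : Prop :=
  ∀ g : ℕ → G, Function.Injective g →
    ∃ φ : ℕ → ℕ, StrictMono φ ∧ ∃ a b : M,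
      ∀ K : Set M, IsCompact K → K ⊆ {a}ᶜ →
        ∀ U ∈ nhds b, ∀ᶠ n in atTop, (g (φ n)) • K ⊆ U

section Triples

open Filter

variable {M : Type*} [TopologicalSpace M]

/-- The space of distinct triples of `M`. -/
def Tri (M : Type*) : Type _ :=
  {x : M × M × M // x.1 ≠ x.2.1 ∧ x.2.1 ≠ x.2.2 ∧ x.1 ≠ x.2.2}

/-- The components of a triple. -/
def comp (x : Tri M) : Fin 3 → M := ![x.val.1, x.val.2.1, x.val.2.2]

/-- At least two of the three components of `x` lie in `U`. -/
def TwoIn (U : Set M) (x : Tri M) : Prop :=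
  ∃ i j : Fin 3, i ≠ j ∧ comp x i ∈ U ∧ comp x j ∈ U

/-- Convergence of a sequence of distinct triples to a boundary point `p ∈ M` in Tukia's
topology on `T ∪ M`: eventually at least two components lie in any open neighbourhood of `p`. -/
def TukiaTendsto (x : ℕ → Tri M) (p : M) : Prop :=
  ∀ U : Set M, IsOpen U → p ∈ U → ∀ᶠ n in atTop, TwoIn U (x n)

/-- The quasimetric on the space of distinct triples: the maximum of the crossratios of
pairs of components. -/
noncomputable def rhoT (𝒜 : Set (Set M × Set M)) (x y : Tri M) : ℕ∞ :=
  ⨆ (i : Fin 3) (j : Fin 3) (k : Fin 3) (l : Fin 3) (_ : i ≠ j) (_ : k ≠ l),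
    crossratio 𝒜 (comp x i) (comp x j) (comp y k) (comp y l)

/-- `D_M(x,R)`: the points of `M` reachable as Tukia limits of sequences of triples staying
within `ρ`-distance `R` of `x`. -/
def DM (𝒜 : Set (Set M × Set M)) (x : Tri M) (R : ℕ) : Set M :=
  {p | ∃ xs : ℕ → Tri M, (∀ n, rhoT 𝒜 x (xs n) ≤ (R : ℕ∞)) ∧ TukiaTendsto xs p}

/-- A finite boundary point: a point of `M` which is a Tukia limit of a sequence of triples
at bounded `ρ`-distance from some basepoint. -/
def FiniteBoundaryPoint (𝒜 : Set (Set M × Set M)) (p : M) : Prop :=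
  ∃ (x₀ : Tri M) (xs : ℕ → Tri M) (R : ℕ),
    (∀ n, rhoT 𝒜 x₀ (xs n) ≤ (R : ℕ∞)) ∧ TukiaTendsto xs p

end Triples

section Aux

variable {M : Type*} [TopologicalSpace M]

lemma crossratio_le_rhoT (𝒜 : Set (Set M × Set M)) (x y : Tri M)
    (i j k l : Fin 3) (hij : i ≠ j) (hkl : k ≠ l) :
    crossratio 𝒜 (comp x i) (comp x j) (comp y k) (comp y l) ≤ rhoT 𝒜 x y := by
  unfold rhoT
  exact le_iSup_of_le i <| le_iSup_of_le j <| le_iSup_of_le k <| le_iSup_of_le l <|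
    le_iSup_of_le hij <| le_iSup_of_le hkl le_rfl

lemma le_chainLen {𝒜 : Set (Set M × Set M)} {K L : Set M} {n : ℕ}
    (h : HasChain 𝒜 K L n) : (n : ℕ∞) ≤ chainLen 𝒜 K L :=
  le_iSup_of_le n (le_iSup_of_le h le_rfl)

lemma annSys_swap {G : Type*} [Group G] [MulAction G M] {A B : Set M × Set M}
    (h : B ∈ annSys G A) : (B.2, B.1) ∈ annSys G A := by
  obtain ⟨g, hg | hg⟩ := h
  · exact ⟨g, Or.inr (by rw [hg])⟩
  · exact ⟨g, Or.inl (by rw [hg])⟩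

/-- Key lemma: if `p` is a Tukia limit of triples within `ρ`-distance `R` of `x`, then
there is no chain of length `≥ R+1` from a pair of components of `x` to `{p}`. -/
lemma key_no_chain (𝒜 : Set (Set M × Set M)) (x : Tri M) (R : ℕ) (p : M)
    (i j : Fin 3) (hij : i ≠ j) (xs : ℕ → Tri M)
    (hxs : ∀ n, rhoT 𝒜 x (xs n) ≤ (R : ℕ∞)) (hT : TukiaTendsto xs p)
    (n : ℕ) (hn : R + 1 ≤ n)
    (hch : HasChain 𝒜 {comp x i, comp x j} {p} n) : False := by
  obtain ⟨c, hmem, hK, hlt, hL⟩ := hch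
  have hn1 : n - 1 < n := by omega
  have hlast : p ∈ interior (c ⟨n - 1, hn1⟩).2 :=
    hL ⟨n - 1, hn1⟩ (show n - 1 + 1 = n by omega) rfl
  have hev := hT _ isOpen_interior hlast
  obtain ⟨m, k, l, hkl, hk, hl⟩ := hev.exists
  have hch2 : HasChain 𝒜 {comp x i, comp x j} {comp (xs m) k, comp (xs m) l} n := by
    refine ⟨c, hmem, hK, hlt, fun i' hi' => ?_⟩
    have hi'' : i' = ⟨n - 1, hn1⟩ := Fin.ext (show (i' : ℕ) = n - 1 by omega)
    subst hi''
    intro q hq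
    rcases hq with rfl | hq
    · exact hk
    · rw [Set.mem_singleton_iff] at hq; subst hq; exact hl
  have h1 : (n : ℕ∞) ≤ crossratio 𝒜 (comp x i) (comp x j) (comp (xs m) k) (comp (xs m) l) :=
    le_chainLen hch2
  have h2 := crossratio_le_rhoT 𝒜 x (xs m) i j k l hij hkl
  have h3 : (n : ℕ∞) ≤ (R : ℕ∞) := (h1.trans h2).trans (hxs m)
  rw [Nat.cast_le] at h3
  omega

end Aux

theorem DM_disjoint_of_far
    {G M : Type*} [Group G] [Countable G] [TopologicalSpace M]
    [CompactSpace M] [TopologicalSpace.MetrizableSpace M] [MulAction G M]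
    (hcont : ∀ g : G, Continuous fun m : M => g • m)
    (hconv : ConvergenceAction G M)
    (A : Set M × Set M) (hA : IsAnnulus A)
    (x y : Tri M) (R : ℕ)
    (hfar : ((2 * R + 2 : ℕ) : ℕ∞) ≤ rhoT (annSys G A) x y) :
    DM (annSys G A) x R ∩ DM (annSys G A) y R = ∅ := by
  ext p
  simp only [Set.mem_inter_iff, Set.mem_empty_iff_false, iff_false]
  rintro ⟨⟨xs, hxs, hTx⟩, ⟨ys, hys, hTy⟩⟩
  -- extract a long chain from components of x to components of y
  have hex : ∃ (i j k l : Fin 3), i ≠ j ∧ k ≠ l ∧ ∃ n, 2 * R + 2 ≤ n ∧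
      HasChain (annSys G A) {comp x i, comp x j} {comp y k, comp y l} n := by
    by_contra hcon
    push_neg at hcon
    have hb : rhoT (annSys G A) x y ≤ ((2 * R + 1 : ℕ) : ℕ∞) := by
      unfold rhoT
      refine iSup_le fun i => iSup_le fun j => iSup_le fun k => iSup_le fun l =>
        iSup_le fun hij => iSup_le fun hkl => ?_
      unfold crossratio chainLen
      refine iSup_le fun n => iSup_le fun hch => ?_
      rw [Nat.cast_le]
      by_contra hle
      exact hcon i j k l hij hkl n (by omega) hch
    have := hfar.trans hb
    rw [Nat.cast_le] at this
    omega
  obtain ⟨i, j, k, l, hij, hkl, n, hn, c, hmem, hK, hlt, hL⟩ := hex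
  have hRlt : R < n := by omega
  have hR1lt : R + 1 < n := by omega
  have hsplit := hlt ⟨R, hRlt⟩ ⟨R + 1, hR1lt⟩ rfl
  have hp : p ∈ interior (c ⟨R, hRlt⟩).2 ∪ interior (c ⟨R + 1, hR1lt⟩).1 := by
    rw [hsplit]; trivial
  rcases hp with hp | hp
  · -- chain of length R+1 from {x i, x j} to {p}
    refine key_no_chain (annSys G A) x R p i j hij xs hxs hTx (R + 1) le_rfl ?_
    have hb : ∀ t : Fin (R + 1), (t : ℕ) < n := fun t => by omega
    refine ⟨fun t => c ⟨t, hb t⟩, fun t => hmem _, ?_, ?_, ?_⟩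
    · intro t ht
      exact hK ⟨(t : ℕ), hb t⟩ ht
    · intro a b hab
      exact hlt ⟨(a : ℕ), hb a⟩ ⟨(b : ℕ), hb b⟩ hab
    · intro t ht
      have h2 : ({p} : Set M) ⊆ interior (c ⟨R, hRlt⟩).2 := Set.singleton_subset_iff.mpr hp
      have he : (⟨(t : ℕ), hb t⟩ : Fin n) = ⟨R, hRlt⟩ := Fin.ext (show (t : ℕ) = R by omega)
      rw [← he] at h2
      exact h2
  · -- reversed chain of length n - R - 1 from {y k, y l} to {p}
    refine key_no_chain (annSys G A) y R p k l hkl ys hys hTy (n - R - 1) (by omega) ?_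
    have hb : ∀ t : Fin (n - R - 1), n - 1 - (t : ℕ) < n := fun t => by omega
    have hn1 : n - 1 < n := by omega
    refine ⟨fun t => ((c ⟨n - 1 - (t : ℕ), hb t⟩).2, (c ⟨n - 1 - (t : ℕ), hb t⟩).1),
      fun t => annSys_swap (hmem _), ?_, ?_, ?_⟩
    · intro t ht
      have h2 := hL ⟨n - 1, hn1⟩ (show n - 1 + 1 = n by omega)
      have he : (⟨n - 1 - (t : ℕ), hb t⟩ : Fin n) = ⟨n - 1, hn1⟩ :=
        Fin.ext (show n - 1 - (t : ℕ) = n - 1 by omega)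
      rw [← he] at h2
      exact h2
    · intro a b hab
      have hbb : (b : ℕ) < n - R - 1 := b.isLt
      have h2 := hlt ⟨n - 1 - (b : ℕ), hb b⟩ ⟨n - 1 - (a : ℕ), hb a⟩
        (show n - 1 - (b : ℕ) + 1 = n - 1 - (a : ℕ) by omega)
      unfold AnnLt at h2 ⊢
      rw [Set.union_comm] at h2
      exact h2
    · intro t ht
      have h2 : ({p} : Set M) ⊆ interior (c ⟨R + 1, hR1lt⟩).1 := Set.singleton_subset_iff.mpr hp
      have he : (⟨n - 1 - (t : ℕ), hb t⟩ : Fin n) = ⟨R + 1, hR1lt⟩ :=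
        Fin.ext (show n - 1 - (t : ℕ) = R + 1 by omega)
      rw [← he] at h2
      exact h2
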